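/- Suppose f : ℝ^{2d} → ℂ satisfies: for every λ > 0 there is C_λ with |f(z)| ≤ C_λ e^{λ⟨z⟩}, and there exist ε, δ > 0 with |f(z)| ≤ C e^{−ε⟨z⟩} for z ∈ Γ_δ. Suppose further |F(w)| ≤ ∫ e^{−ε'|w−χ(z)|} |f(z)| dz with ε' > 0 and χ : ℝ^{2d} → ℝ^{2d} bi-Lipschitz and measure-preserving. Then there exist η > 0, δ' > 0 and C'' such that |F(w)| ≤ C'' e^{−η⟨w⟩} for all w ∈ χ(Γ)_{δ'}. -/

import Mathlib

open Real MeasureTheory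

/-- Japanese bracket. -/
noncomputable def jb {n : ℕ} (z : EuclideanSpace ℝ (Fin n)) : ℝ :=
  Real.sqrt (1 + ‖z‖ ^ 2)

/-- The `δ`-neighborhood of a set `Γ ⊆ ℝ^n`. -/
def nbhd {n : ℕ} (Γ : Set (EuclideanSpace ℝ (Fin n))) (δ : ℝ) :
    Set (EuclideanSpace ℝ (Fin n)) :=
  {z | ∃ z₀ ∈ Γ, ‖z - z₀‖ < δ * jb z₀}

lemma jb_one_le {n : ℕ} (z : EuclideanSpace ℝ (Fin n)) : 1 ≤ jb z := by
  rw [jb]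
  have h := Real.sqrt_le_sqrt (show (1:ℝ) ≤ 1 + ‖z‖ ^ 2 by nlinarith [sq_nonneg ‖z‖])
  simpa using h

lemma jb_pos {n : ℕ} (z : EuclideanSpace ℝ (Fin n)) : 0 < jb z :=
  lt_of_lt_of_le one_pos (jb_one_le z)

lemma norm_le_jb {n : ℕ} (z : EuclideanSpace ℝ (Fin n)) : ‖z‖ ≤ jb z := by
  rw [jb]
  have h := Real.sqrt_le_sqrt (show ‖z‖ ^ 2 ≤ 1 + ‖z‖ ^ 2 by linarith)
  rwa [Real.sqrt_sq (norm_nonneg z)] at h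

lemma jb_le {n : ℕ} (z : EuclideanSpace ℝ (Fin n)) : jb z ≤ 1 + ‖z‖ := by
  rw [jb, show (1:ℝ) + ‖z‖ = Real.sqrt ((1 + ‖z‖) ^ 2) by
    rw [Real.sqrt_sq (by positivity)]]
  exact Real.sqrt_le_sqrt (by nlinarith [norm_nonneg z])

lemma integrable_exp_neg_norm' {n : ℕ} {c : ℝ} (hc : 0 < c) :
    Integrable (fun x : EuclideanSpace ℝ (Fin n) => Real.exp (-c * ‖x‖)) := by
  set N : ℕ := Module.finrank ℝ (EuclideanSpace ℝ (Fin n)) + 1 with hN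
  have hNpos : (0:ℝ) < N := by positivity
  obtain ⟨m, hm⟩ : ∃ x : ℝ, x = min 1 (c / N) := ⟨_, rfl⟩
  have hm0 : 0 < m := by rw [hm]; exact lt_min one_pos (by positivity)
  have key : ∀ t : ℝ, 0 ≤ t → (m * (1 + t)) ^ N ≤ Real.exp (c * t) := by
    intro t ht
    have h1 : m * (1 + t) ≤ 1 + c / N * t := by
      have l1 : m ≤ 1 := by rw [hm]; exact min_le_left _ _
      have l2 : m ≤ c / N := by rw [hm]; exact min_le_right _ _
      nlinarith [mul_le_mul_of_nonneg_right l2 ht]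
    calc (m * (1 + t)) ^ N ≤ (1 + c / N * t) ^ N :=
          pow_le_pow_left₀ (by positivity) h1 N
      _ ≤ (Real.exp (c / N * t)) ^ N := by
          apply pow_le_pow_left₀ (by positivity)
          linarith [Real.add_one_le_exp (c / N * t)]
      _ = Real.exp ((N : ℝ) * (c / N * t)) := (Real.exp_nat_mul _ N).symm
      _ = Real.exp (c * t) := by
          congr 1
          field_simp
  have hfin : (Module.finrank ℝ (EuclideanSpace ℝ (Fin n)) : ℝ) < (N : ℝ) := by
    rw [hN]; push_cast; linarith
  refine ((integrable_one_add_norm (E := EuclideanSpace ℝ (Fin n)) hfin).const_mul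
    ((m ^ N)⁻¹)).mono' ?_ (Filter.Eventually.of_forall fun x => ?_)
  · exact (Real.continuous_exp.comp (continuous_const.mul continuous_norm)).aestronglyMeasurable
  · rw [Real.norm_eq_abs, abs_of_nonneg (Real.exp_pos _).le]
    have h2 : Real.exp (-c * ‖x‖) = (Real.exp (c * ‖x‖))⁻¹ := by
      rw [← Real.exp_neg]; ring_nf
    have h3 : (1 + ‖x‖) ^ (-(N:ℝ)) = ((1 + ‖x‖) ^ N)⁻¹ := by
      rw [Real.rpow_neg (by positivity), Real.rpow_natCast]
    rw [h2, h3, ← mul_inv]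
    apply inv_anti₀ (by positivity)
    calc m ^ N * (1 + ‖x‖) ^ N = (m * (1 + ‖x‖)) ^ N := (mul_pow _ _ _).symm
      _ ≤ Real.exp (c * ‖x‖) := key _ (norm_nonneg x)

set_option maxHeartbeats 1000000 in
theorem propagation_of_regularity (d : ℕ)
    (χ ψ : EuclideanSpace ℝ (Fin (2 * d)) → EuclideanSpace ℝ (Fin (2 * d)))
    (K K' : NNReal) (hχ : LipschitzWith K χ) (hψ : LipschitzWith K' ψ)
    (hl : Function.LeftInverse ψ χ) (hr : Function.RightInverse ψ χ)
    (hmp : MeasurePreserving χ volume volume)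
    (Γ : Set (EuclideanSpace ℝ (Fin (2 * d))))
    (f F : EuclideanSpace ℝ (Fin (2 * d)) → ℂ)
    (hf1 : ∀ lam : ℝ, 0 < lam → ∃ Clam : ℝ, ∀ z,
      ‖f z‖ ≤ Clam * Real.exp (lam * jb z))
    (ε δ Cf : ℝ) (hε : 0 < ε) (hδ0 : 0 < δ) (hδ1 : δ < 1)
    (hf2 : ∀ z ∈ nbhd Γ δ, ‖f z‖ ≤ Cf * Real.exp (-ε * jb z))
    (ε' : ℝ) (hε' : 0 < ε')
    (hF : ∀ w, ‖F w‖ ≤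
      ∫ z, Real.exp (-ε' * ‖w - χ z‖) * ‖f z‖) :
    ∃ η > 0, ∃ δ' > 0, ∃ C'' : ℝ,
      ∀ w ∈ nbhd (χ '' Γ) δ', ‖F w‖ ≤ C'' * Real.exp (-η * jb w) := by
  -- basic constants
  obtain ⟨M, hMdef⟩ : ∃ x : ℝ, x = 1 + ‖χ 0‖ + (K : ℝ) := ⟨_, rfl⟩
  have hK0 : (0:ℝ) ≤ K := K.coe_nonneg
  have hM1 : (1:ℝ) ≤ M := by
    have h := norm_nonneg (χ 0); rw [hMdef]; linarith only [h, hK0]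
  have hM0 : (0:ℝ) < M := lt_of_lt_of_le one_pos hM1
  obtain ⟨Kb, hKbdef⟩ : ∃ x : ℝ, x = max (K' : ℝ) 1 := ⟨_, rfl⟩
  have hKb1 : (1:ℝ) ≤ Kb := by rw [hKbdef]; exact le_max_right _ _
  have hKb0 : (0:ℝ) < Kb := lt_of_lt_of_le one_pos hKb1
  obtain ⟨B1, hB1def⟩ : ∃ x : ℝ, x = δ / (2 * Kb) := ⟨_, rfl⟩
  obtain ⟨B2, hB2def⟩ : ∃ x : ℝ, x = 2 * Kb / δ := ⟨_, rfl⟩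
  -- Lipschitz facts
  have hχnorm : ∀ z, ‖χ z‖ ≤ ‖χ 0‖ + K * ‖z‖ := by
    intro z
    have h1 := hχ.dist_le_mul z 0
    rw [dist_eq_norm, dist_eq_norm, sub_zero] at h1
    have h2 : ‖χ z‖ - ‖χ 0‖ ≤ ‖χ z - χ 0‖ := norm_sub_norm_le _ _
    linarith only [h1, h2]
  have hinv : ∀ z z', ‖z - z'‖ ≤ Kb * ‖χ z - χ z'‖ := by
    intro z z'
    have h1 := hψ.dist_le_mul (χ z) (χ z')
    rw [hl z, hl z', dist_eq_norm, dist_eq_norm] at h1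
    calc ‖z - z'‖ ≤ K' * ‖χ z - χ z'‖ := h1
      _ ≤ Kb * ‖χ z - χ z'‖ := by
          rw [hKbdef]
          exact mul_le_mul_of_nonneg_right (le_max_left _ _) (norm_nonneg _)
  have hjbw : ∀ w z, jb w ≤ M * (jb z + ‖w - χ z‖) := by
    intro w z
    have t1 := jb_le w
    have t2 : ‖w‖ - ‖χ z‖ ≤ ‖w - χ z‖ := norm_sub_norm_le _ _
    have t3 := hχnorm z
    have t4 := jb_one_le z
    have t5 := norm_le_jb z
    have t6 := norm_nonneg (w - χ z)
    have t7 := norm_nonneg (χ 0)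
    rw [hMdef]
    nlinarith only [t1, t2, t3, t4, t5, t6, t7, hK0,
      mul_nonneg hK0 (sub_nonneg.2 t5), mul_nonneg t7 (sub_nonneg.2 t4),
      mul_nonneg (add_nonneg t7 hK0) t6]
  have hjbχ : ∀ z, jb (χ z) ≤ M * jb z := by
    intro z
    have t1 := jb_le (χ z)
    have t3 := hχnorm z
    have t4 := jb_one_le z
    have t5 := norm_le_jb z
    rw [hMdef]
    nlinarith only [t1, t3, t4, t5, hK0, norm_nonneg (χ 0),
      mul_nonneg hK0 (sub_nonneg.2 t5),
      mul_nonneg (norm_nonneg (χ 0)) (sub_nonneg.2 t4)]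
  -- derived constants
  obtain ⟨δ', hδ'def⟩ : ∃ x : ℝ, x = δ / (2 * Kb * M) := ⟨_, rfl⟩
  have hδ'0 : 0 < δ' := by rw [hδ'def]; positivity
  have hδ'1 : δ' ≤ 1 := by
    rw [hδ'def, div_le_one (by positivity)]
    nlinarith only [hδ1, hKb1, hM1,
      mul_nonneg (sub_nonneg.2 hKb1) (sub_nonneg.2 hM1)]
  obtain ⟨μ', hμdef⟩ : ∃ x : ℝ, x = min ε' (ε / 2) := ⟨_, rfl⟩
  have hμ0 : 0 < μ' := by rw [hμdef]; exact lt_min hε' (by positivity)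
  obtain ⟨η₁, hη₁def⟩ : ∃ x : ℝ, x = μ' / M := ⟨_, rfl⟩
  have hη₁0 : 0 < η₁ := by rw [hη₁def]; positivity
  obtain ⟨c₂, hc₂def⟩ : ∃ x : ℝ, x = δ / (6 * M * Kb) := ⟨_, rfl⟩
  have hc₂0 : 0 < c₂ := by rw [hc₂def]; positivity
  obtain ⟨η₂, hη₂def⟩ : ∃ x : ℝ, x = ε' * c₂ / 2 := ⟨_, rfl⟩
  have hη₂0 : 0 < η₂ := by rw [hη₂def]; positivity
  obtain ⟨A, hAdef⟩ : ∃ x : ℝ, x = Kb * (1 + 4 / δ) := ⟨_, rfl⟩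
  have hA0 : 0 < A := by rw [hAdef]; positivity
  obtain ⟨a, hadef⟩ : ∃ x : ℝ, x = ε' / (2 * A) := ⟨_, rfl⟩
  have ha0 : 0 < a := by rw [hadef]; positivity
  obtain ⟨Ca, hCa⟩ := hf1 (a / 2) (by positivity)
  have hCa0 : 0 ≤ Ca := by
    by_contra h
    push_neg at h
    have h1 := hCa 0
    have h2 := Real.exp_pos (a / 2 * jb (0 : EuclideanSpace ℝ (Fin (2 * d))))
    have h3 := norm_nonneg (f 0)
    linarith only [h1, h3, mul_neg_of_neg_of_pos h h2]
  obtain ⟨η, hηdef⟩ : ∃ x : ℝ, x = min η₁ η₂ := ⟨_, rfl⟩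
  have hη0 : 0 < η := by rw [hηdef]; exact lt_min hη₁0 hη₂0
  obtain ⟨c, hcdef⟩ : ∃ x : ℝ, x = min (ε / 2) (a / 2) := ⟨_, rfl⟩
  have hc0 : 0 < c := by rw [hcdef]; exact lt_min (by positivity) (by positivity)
  obtain ⟨D, hDdef⟩ : ∃ x : ℝ, x = max |Cf| (Ca * Real.exp (a / 2)) := ⟨_, rfl⟩
  have hD0 : 0 ≤ D := by rw [hDdef]; exact le_trans (abs_nonneg Cf) (le_max_left _ _)
  refine ⟨η, hη0, δ', hδ'0,
    D * ∫ z : EuclideanSpace ℝ (Fin (2 * d)), Real.exp (-c * ‖z‖), ?_⟩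
  intro w hw
  obtain ⟨w₀, hw₀Γ, hww₀⟩ := hw
  obtain ⟨z₀, hz₀Γ, rfl⟩ := hw₀Γ
  -- bound for jb w
  have hjw : jb w ≤ 3 * M * jb z₀ := by
    have t1 := jb_le w
    have t2 : ‖w‖ - ‖χ z₀‖ ≤ ‖w - χ z₀‖ := norm_sub_norm_le _ _
    have t3 : ‖w - χ z₀‖ < δ' * jb (χ z₀) := hww₀
    have t4 := jb_one_le (χ z₀)
    have t5 := norm_le_jb (χ z₀)
    have t6 := hjbχ z₀
    have t7 := jb_pos (χ z₀)
    have t8 : δ' * jb (χ z₀) ≤ 1 * jb (χ z₀) :=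
      mul_le_mul_of_nonneg_right hδ'1 t7.le
    nlinarith only [t1, t2, t3, t4, t5, t6, t8]
  -- the distance bound used in the outside case
  have hww₀' : ‖w - χ z₀‖ ≤ B1 * jb z₀ := by
    have t3 : ‖w - χ z₀‖ < δ' * jb (χ z₀) := hww₀
    have t6 := hjbχ z₀
    have t9 : δ' * jb (χ z₀) ≤ δ' * (M * jb z₀) :=
      mul_le_mul_of_nonneg_left t6 hδ'0.le
    have heq : δ' * (M * jb z₀) = B1 * jb z₀ := by
      rw [hδ'def, hB1def]; field_simp; try ring
    exact le_of_lt (lt_of_lt_of_le t3 (t9.trans_eq heq))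
  -- pointwise bound on the integrand
  have hpt : ∀ z, Real.exp (-ε' * ‖w - χ z‖) * ‖f z‖ ≤
      D * Real.exp (-η * jb w) * Real.exp (-c * ‖z‖) := by
    intro z
    obtain ⟨X, hXdef⟩ : ∃ x : ℝ, x = ‖w - χ z‖ := ⟨_, rfl⟩
    rw [← hXdef]
    have hX0 : 0 ≤ X := hXdef ▸ norm_nonneg _
    by_cases hzin : z ∈ nbhd Γ δ
    · -- inside the neighborhood: f decays
      have h1 := hf2 z hzin
      have hexp : η * jb w + c * ‖z‖ ≤ ε' * X + ε * jb z := by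
        have e1 : η * jb w ≤ η₁ * jb w := by
          rw [hηdef]
          exact mul_le_mul_of_nonneg_right (min_le_left _ _) (jb_pos w).le
        have e2 : η₁ * jb w ≤ η₁ * (M * (jb z + X)) := by
          apply mul_le_mul_of_nonneg_left _ hη₁0.le
          rw [hXdef]
          exact hjbw w z
        have e3 : η₁ * (M * (jb z + X)) = μ' * (jb z + X) := by
          rw [hη₁def]; field_simp; try ring
        have l1 : μ' ≤ ε' := by rw [hμdef]; exact min_le_left _ _
        have l2 : μ' ≤ ε / 2 := by rw [hμdef]; exact min_le_right _ _
        have e4 : μ' * (jb z + X) ≤ ε / 2 * jb z + ε' * X := by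
          nlinarith only [mul_le_mul_of_nonneg_right l2 (jb_pos z).le,
            mul_le_mul_of_nonneg_right l1 hX0]
        have e5 : c * ‖z‖ ≤ ε / 2 * jb z := by
          have m1 : c ≤ ε / 2 := by rw [hcdef]; exact min_le_left _ _
          have m2 := norm_le_jb z
          nlinarith only [mul_le_mul_of_nonneg_right m1 (norm_nonneg z),
            mul_le_mul_of_nonneg_left m2 (show (0:ℝ) ≤ ε / 2 by positivity)]
        linarith only [e1, e2, e3.le, e4, e5]
      calc Real.exp (-ε' * X) * ‖f z‖
          ≤ Real.exp (-ε' * X) * (Cf * Real.exp (-ε * jb z)) :=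
            mul_le_mul_of_nonneg_left h1 (Real.exp_pos _).le
        _ = Cf * Real.exp (-ε' * X + -ε * jb z) := by rw [Real.exp_add]; ring
        _ ≤ |Cf| * Real.exp (-ε' * X + -ε * jb z) :=
            mul_le_mul_of_nonneg_right (le_abs_self Cf) (Real.exp_pos _).le
        _ ≤ D * Real.exp (-η * jb w + -c * ‖z‖) := by
            apply mul_le_mul (by rw [hDdef]; exact le_max_left _ _) _ (Real.exp_pos _).le hD0
            apply Real.exp_le_exp.2
            linarith only [hexp]
        _ = D * Real.exp (-η * jb w) * Real.exp (-c * ‖z‖) := by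
            rw [Real.exp_add]; ring
    · -- outside the neighborhood: the kernel decays
      have hfar : δ * jb z₀ ≤ ‖z - z₀‖ := by
        by_contra h
        push_neg at h
        exact hzin ⟨z₀, hz₀Γ, h⟩
      have h2 : δ * jb z₀ ≤ Kb * ‖χ z - χ z₀‖ := le_trans hfar (hinv z z₀)
      have htri : ‖χ z - χ z₀‖ ≤ X + ‖w - χ z₀‖ := by
        have h := norm_sub_le_norm_sub_add_norm_sub (χ z) w (χ z₀)
        have h' : ‖χ z - w‖ = X := by rw [hXdef, norm_sub_rev]
        linarith only [h, h'.le, h'.ge]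
      have c1 : Kb * ‖χ z - χ z₀‖ ≤ Kb * X + Kb * ‖w - χ z₀‖ := by
        nlinarith only [mul_le_mul_of_nonneg_left htri hKb0.le]
      have c2 : Kb * ‖w - χ z₀‖ ≤ δ / 2 * jb z₀ := by
        have h := mul_le_mul_of_nonneg_left hww₀' hKb0.le
        have heq2 : Kb * (B1 * jb z₀) = δ / 2 * jb z₀ := by
          rw [hB1def]; field_simp; try ring
        linarith only [h, heq2.le]
      have h4 : δ / 2 * jb z₀ ≤ Kb * X := by linarith only [h2, c1, c2]
      have h3 : B1 * jb z₀ ≤ X := by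
        have h6 := mul_le_mul_of_nonneg_right h4 (inv_nonneg.2 hKb0.le)
        have e1 : (δ / 2 * jb z₀) * Kb⁻¹ = B1 * jb z₀ := by
          rw [hB1def]; field_simp; try ring
        have e2 : (Kb * X) * Kb⁻¹ = X := by field_simp; try ring
        linarith only [h6, e1.ge, e2.le]
      -- jb w controlled by X
      have hw1 : η * jb w ≤ ε' / 2 * X := by
        have e1 : η * jb w ≤ η₂ * jb w := by
          rw [hηdef]
          exact mul_le_mul_of_nonneg_right (min_le_right _ _) (jb_pos w).le
        have l1 : c₂ * jb w ≤ c₂ * (3 * M * jb z₀) :=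
          mul_le_mul_of_nonneg_left hjw hc₂0.le
        have l2 : c₂ * (3 * M * jb z₀) = B1 * jb z₀ := by
          rw [hc₂def, hB1def]; field_simp; try ring
        have e2 : c₂ * jb w ≤ X := le_trans (le_of_le_of_eq l1 l2) h3
        have e3 : η₂ * jb w = ε' / 2 * (c₂ * jb w) := by rw [hη₂def]; ring
        have e4 : ε' / 2 * (c₂ * jb w) ≤ ε' / 2 * X :=
          mul_le_mul_of_nonneg_left e2 (by positivity)
        linarith only [e1, e3.le, e4]
      -- jb z₀ controlled by X
      have t4 : jb z₀ ≤ B2 * X := by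
        have h7 := mul_le_mul_of_nonneg_left h3
          (show (0:ℝ) ≤ B2 by rw [hB2def]; positivity)
        have e : B2 * (B1 * jb z₀) = jb z₀ := by
          rw [hB1def, hB2def]; field_simp; try ring
        linarith only [h7, e.ge]
      -- ‖z‖ controlled by X
      have hz1 : ‖z‖ ≤ A * X := by
        have t1 : ‖z‖ - ‖z₀‖ ≤ ‖z - z₀‖ := norm_sub_norm_le _ _
        have t2 : ‖z - z₀‖ ≤ Kb * ‖χ z - χ z₀‖ := hinv z z₀
        have t3 : ‖z₀‖ ≤ jb z₀ := norm_le_jb z₀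
        have e9 : A * X = Kb * X + 2 * B2 * X := by
          rw [hAdef, hB2def]; field_simp; try ring
        have hint1 : 0 ≤ (2 - δ) * jb z₀ :=
          mul_nonneg (by linarith only [hδ1]) (jb_pos z₀).le
        nlinarith only [t1, t2, t3, c1, c2, t4, e9.ge, hint1]
      have hz2 : a * ‖z‖ ≤ ε' / 2 * X := by
        have e1 : a * ‖z‖ ≤ a * (A * X) :=
          mul_le_mul_of_nonneg_left hz1 ha0.le
        have e2 : a * (A * X) = ε' / 2 * X := by
          rw [hadef]; field_simp; try ring
        linarith only [e1, e2.le]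
      have hexp : η * jb w + c * ‖z‖ + a / 2 * jb z ≤ a / 2 + ε' * X := by
        have l4 : c * ‖z‖ ≤ a / 2 * ‖z‖ := by
          apply mul_le_mul_of_nonneg_right _ (norm_nonneg z)
          rw [hcdef]; exact min_le_right _ _
        have l5 : a / 2 * jb z ≤ a / 2 * (1 + ‖z‖) :=
          mul_le_mul_of_nonneg_left (jb_le z) (by positivity)
        linarith only [hw1, l4, l5, hz2]
      calc Real.exp (-ε' * X) * ‖f z‖
          ≤ Real.exp (-ε' * X) * (Ca * Real.exp (a / 2 * jb z)) :=
            mul_le_mul_of_nonneg_left (hCa z) (Real.exp_pos _).le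
        _ = Ca * Real.exp (-ε' * X + a / 2 * jb z) := by rw [Real.exp_add]; ring
        _ ≤ Ca * Real.exp (a / 2 + (-η * jb w + -c * ‖z‖)) := by
            apply mul_le_mul_of_nonneg_left _ hCa0
            apply Real.exp_le_exp.2
            linarith only [hexp]
        _ = (Ca * Real.exp (a / 2)) * Real.exp (-η * jb w + -c * ‖z‖) := by
            rw [Real.exp_add]; ring
        _ ≤ D * Real.exp (-η * jb w + -c * ‖z‖) := by
            apply mul_le_mul_of_nonneg_right _ (Real.exp_pos _).le
            rw [hDdef]; exact le_max_right _ _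
        _ = D * Real.exp (-η * jb w) * Real.exp (-c * ‖z‖) := by
            rw [Real.exp_add]; ring
  -- conclude via monotonicity of the integral
  have hgint : Integrable (fun z : EuclideanSpace ℝ (Fin (2 * d)) =>
      D * Real.exp (-η * jb w) * Real.exp (-c * ‖z‖)) :=
    (integrable_exp_neg_norm' hc0).const_mul _
  have hmono : (∫ z, Real.exp (-ε' * ‖w - χ z‖) * ‖f z‖) ≤
      ∫ z : EuclideanSpace ℝ (Fin (2 * d)),
        D * Real.exp (-η * jb w) * Real.exp (-c * ‖z‖) := by
    apply integral_mono_of_nonneg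
    · exact Filter.Eventually.of_forall fun z =>
        mul_nonneg (Real.exp_pos _).le (norm_nonneg _)
    · exact hgint
    · exact Filter.Eventually.of_forall hpt
  have heq : (∫ z : EuclideanSpace ℝ (Fin (2 * d)),
      D * Real.exp (-η * jb w) * Real.exp (-c * ‖z‖)) =
      (D * ∫ z : EuclideanSpace ℝ (Fin (2 * d)), Real.exp (-c * ‖z‖)) *
        Real.exp (-η * jb w) := by
    rw [integral_const_mul]; ring
  calc ‖F w‖ ≤ ∫ z, Real.exp (-ε' * ‖w - χ z‖) * ‖f z‖ := hF w
    _ ≤ _ := hmono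
    _ = _ := heq
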